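/- Let V be a finite-dimensional complex inner product space, T : V → V a self-adjoint linear operator, and v ∈ V a nonzero vector. Then for every t ∈ ℝ the function ψ(t) = log ‖exp(tT) v‖ is differentiable at t with derivative ψ′(t) = ⟨w, Tw⟩ / ⟨w, w⟩, where w = exp(tT) v. -/

import Mathlib

open NormedSpace

/-- **Derivative of the Kempf–Ness function.** For a self-adjoint operator `T`
on a finite-dimensional complex inner product space and nonzero `v`, the
function `ψ(t) = log ‖exp(tT) v‖` is differentiable at every `t`, with
derivative `⟨w, Tw⟩ / ⟨w, w⟩` where `w = exp(tT) v`. -/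
theorem kempfNess_deriv (V : Type*) [NormedAddCommGroup V] [InnerProductSpace ℂ V]
    [FiniteDimensional ℂ V] (T : V →L[ℂ] V) (hT : IsSelfAdjoint T)
    (v : V) (hv : v ≠ 0) (t : ℝ) :
    HasDerivAt (fun t : ℝ => Real.log ‖NormedSpace.exp ((t : ℂ) • T) v‖)
      ((inner ℂ (NormedSpace.exp ((t : ℂ) • T) v)
          (T (NormedSpace.exp ((t : ℂ) • T) v)) : ℂ).re /
        (inner ℂ (NormedSpace.exp ((t : ℂ) • T) v)
          (NormedSpace.exp ((t : ℂ) • T) v) : ℂ).re) t := by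
  set f : ℝ → V := fun u => exp ((u : ℂ) • T) v with hf
  set w : V := exp ((t : ℂ) • T) v with hwdef
  -- w ≠ 0
  have hw0 : w ≠ 0 := by
    intro h
    apply hv
    have hmul : exp (-((t : ℂ) • T)) * exp ((t : ℂ) • T) = 1 := by
      letI : NormedAlgebra ℚ (V →L[ℂ] V) := NormedAlgebra.restrictScalars ℚ ℂ _
      rw [← exp_add_of_commute ((Commute.refl ((t : ℂ) • T)).neg_left), neg_add_cancel, exp_zero]
    calc v = (exp (-((t : ℂ) • T)) * exp ((t : ℂ) • T)) v := by rw [hmul]; rfl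
      _ = exp (-((t : ℂ) • T)) w := rfl
      _ = 0 := by rw [h, map_zero]
  -- derivative of exp(u•T)
  have hexp : HasDerivAt (fun u : ℝ => exp ((u : ℂ) • T)) (T * exp ((t : ℂ) • T)) t := by
    have h := hasDerivAt_exp_smul_const' (𝕂 := ℝ) (𝔸 := V →L[ℂ] V) T t
    simp only [Complex.coe_smul] at h ⊢
    exact h
  -- derivative of f
  have hfd : HasDerivAt f (T w) t := by
    have hc : HasDerivAt (fun u : ℝ => (exp ((u : ℂ) • T)).restrictScalars ℝ)
        ((T * exp ((t : ℂ) • T)).restrictScalars ℝ) t :=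
      (ContinuousLinearMap.restrictScalarsL ℂ V V ℝ ℝ).hasFDerivAt.comp_hasDerivAt t hexp
    have := hc.clm_apply (hasDerivAt_const t v)
    simpa [f, w] using this
  -- derivative of u ↦ ⟪f u, f u⟫
  have hinner : HasDerivAt (fun u => (inner ℂ (f u) (f u) : ℂ))
      ((inner ℂ w (T w) : ℂ) + (inner ℂ (T w) w : ℂ)) t := hfd.inner ℂ hfd
  have hre : HasDerivAt (fun u => ((inner ℂ (f u) (f u) : ℂ)).re)
      (((inner ℂ w (T w) : ℂ) + (inner ℂ (T w) w : ℂ)).re) t :=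
    Complex.reCLM.hasFDerivAt.comp_hasDerivAt t hinner
  have hgt : ((inner ℂ w w : ℂ)).re = ‖w‖ ^ 2 := by
    simpa using inner_self_eq_norm_sq (𝕜 := ℂ) w
  have hgt0 : ((inner ℂ w w : ℂ)).re ≠ 0 := by
    rw [hgt]
    exact pow_ne_zero 2 (norm_ne_zero_iff.mpr hw0)
  have hlog := (hre.log hgt0).div_const 2
  have heq : (fun u => Real.log (((inner ℂ (f u) (f u) : ℂ)).re) / 2)
      = fun u : ℝ => Real.log ‖f u‖ := by
    funext u
    have h1 : ((inner ℂ (f u) (f u) : ℂ)).re = ‖f u‖ ^ 2 := by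
      simpa using inner_self_eq_norm_sq (𝕜 := ℂ) (f u)
    rw [h1, Real.log_pow]
    ring
  rw [heq] at hlog
  have hsum : ((inner ℂ w (T w) : ℂ) + (inner ℂ (T w) w : ℂ)).re
      = 2 * ((inner ℂ w (T w) : ℂ)).re := by
    rw [Complex.add_re, ← inner_conj_symm w (T w), Complex.conj_re]
    ring
  refine hlog.congr_deriv ?_
  show _ / (inner ℂ w w : ℂ).re / 2 = _
  rw [hsum]
  field_simp
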